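/- Let A = {a_1 < ... < a_k} be a finite set of integers, h = m·r + ε with 1 ≤ ε ≤ r − 1 and m + ε ≤ k, and let B = (r−1)·(m^∧A) + (m+ε)^∧A. Then |h^(r)A \ B| ≥ ε² − ε, and consequently |h^(r)A| ≥ h·k − m²·r + 1 − 2·m·ε − ε. -/

import Mathlib

open Finset Pointwise

/-- The generalized sumset `h^(r)A`: sums of `h` elements of `A`,
each element used at most `r` times. -/
def genSum {G : Type*} [AddCommGroup G] (r h : ℕ) (A : Finset G) : Set G :=
  {x | ∃ c : G → ℕ, (∀ a, c a ≤ r) ∧ (∀ a, c a ≠ 0 → a ∈ A) ∧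
    (∑ a ∈ A, c a) = h ∧ (∑ a ∈ A, c a • a) = x}

/-- The `r`-fold ordinary sumset `B + ⋯ + B` of a set `B`. -/
def iterSum {G : Type*} [AddCommGroup G] (r : ℕ) (B : Set G) : Set G :=
  {x | ∃ f : Fin r → G, (∀ i, f i ∈ B) ∧ (∑ i, f i) = x}

/-- A set of integers is an arithmetic progression. -/
def IsAPSet (S : Set ℤ) : Prop :=
  ∃ a d : ℤ, ∃ n : ℕ, 0 < d ∧ S = ↑((Finset.range n).image fun i : ℕ => a + d * (i : ℤ))

private lemma div_add_div_le (x y r : ℕ) (hr : 0 < r) : x / r + y / r ≤ (x + y) / r := by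
  rw [Nat.le_div_iff_mul_le hr, add_mul]
  exact add_le_add (Nat.div_mul_le_self x r) (Nat.div_mul_le_self y r)

private lemma mul_add_div' (r m t : ℕ) (hr : 0 < r) (ht : t < r) : (m * r + t) / r = m := by
  rw [mul_comm, Nat.mul_add_div hr, Nat.div_eq_of_lt ht, add_zero]

private lemma div_reflect (r m t : ℕ) (hr : 0 < r) (ht : t < m * r) :
    (m * r - 1 - t) / r = m - 1 - t / r := by
  have hd := Nat.div_add_mod t r
  have hv : t % r < r := Nat.mod_lt _ hr
  have hu : t / r < m := by
    rw [Nat.div_lt_iff_lt_mul hr]; omega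
  obtain ⟨w, hw⟩ : ∃ w, m = t / r + w + 1 := ⟨m - t / r - 1, by omega⟩
  have e1 : m * r = r * (t / r) + w * r + r := by rw [hw]; ring
  have e2 : m * r - 1 - t = w * r + (r - 1 - t % r) := by omega
  rw [e2, mul_add_div' r w _ hr (by omega)]
  omega

private lemma sum_div_block {M : Type*} [AddCommMonoid M] (g : ℕ → M) (r : ℕ) (hr : 0 < r) (m : ℕ) :
    ∑ j ∈ Finset.range (m * r), g (j / r) = ∑ i ∈ Finset.range m, r • g i := by
  induction m with
  | zero => simp
  | succ m ih =>
    have h1 : (m + 1) * r = m * r + r := by ring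
    rw [h1, Finset.range_eq_Ico,
      ← Finset.sum_Ico_consecutive _ (Nat.zero_le (m * r)) (Nat.le_add_right _ _),
      ← Finset.range_eq_Ico, ih, Finset.sum_Ico_eq_sum_range]
    have h2 : m * r + r - m * r = r := by omega
    rw [h2, Finset.sum_range_succ]
    congr 1
    rw [Finset.sum_congr rfl (fun i hi => by
      rw [mul_add_div' r m i hr (Finset.mem_range.mp hi)])]
    simp [Finset.sum_const]

private lemma fiber_le_of_inj {h r : ℕ} (p : Fin h → ℕ) (q : ℕ) (g : Fin h → ℕ)
    (hg : ∀ j, p j = q → g j < r)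
    (hinj : ∀ j₁ j₂, p j₁ = q → p j₂ = q → g j₁ = g j₂ → j₁ = j₂) :
    (Finset.univ.filter fun j => p j = q).card ≤ r := by
  classical
  have hf : ∀ j ∈ Finset.univ.filter (fun j => p j = q), g j ∈ Finset.range r :=
    fun j hj => Finset.mem_range.mpr (hg j (Finset.mem_filter.mp hj).2)
  have hinj' : Set.InjOn g (Finset.univ.filter (fun j => p j = q)) := by
    intro j₁ h₁ j₂ h₂ hgj
    simp only [Finset.coe_filter, Set.mem_setOf_eq] at h₁ h₂
    exact hinj _ _ h₁.2 h₂.2 hgj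
  calc (Finset.univ.filter fun j => p j = q).card
      ≤ (Finset.range r).card := Finset.card_le_card_of_injOn g hf hinj'
    _ = r := Finset.card_range r

private lemma fiber_le_one {h : ℕ} (p : Fin h → ℕ) (q c : ℕ)
    (hc : ∀ j, p j = q → (j : ℕ) = c) :
    (Finset.univ.filter fun j => p j = q).card ≤ 1 := by
  classical
  apply Finset.card_le_one.mpr
  intro j₁ h₁ j₂ h₂
  apply Fin.ext
  rw [hc j₁ (Finset.mem_filter.mp h₁).2, hc j₂ (Finset.mem_filter.mp h₂).2]
private lemma config_mem (A : Finset ℤ) (a : ℕ → ℤ) (hinj : Function.Injective a)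
    (r h : ℕ) (p : Fin h → ℕ) (hpA : ∀ j, a (p j) ∈ A)
    (hmult : ∀ q, (Finset.univ.filter fun j => p j = q).card ≤ r) :
    (∑ j, a (p j)) ∈ genSum r h A := by
  classical
  refine ⟨fun x => (Finset.univ.filter fun j : Fin h => a (p j) = x).card, ?_, ?_, ?_, ?_⟩
  · intro x
    by_cases hx : ∃ j₀, a (p j₀) = x
    · obtain ⟨j₀, hj₀⟩ := hx
      refine le_trans (Finset.card_le_card ?_) (hmult (p j₀))
      intro j hj
      simp only [Finset.mem_filter, Finset.mem_univ, true_and] at hj ⊢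
      exact hinj (by rw [hj, hj₀])
    · have : (Finset.univ.filter fun j : Fin h => a (p j) = x) = ∅ := by
        apply Finset.filter_eq_empty_iff.mpr
        intro j _
        exact fun hc => hx ⟨j, hc⟩
      simp [this]
  · intro x hx
    have : (Finset.univ.filter fun j : Fin h => a (p j) = x).Nonempty := by
      rwa [← Finset.card_pos, Nat.pos_iff_ne_zero]
    obtain ⟨j, hj⟩ := this
    have := (Finset.mem_filter.mp hj).2
    rw [← this]; exact hpA j
  · rw [← Finset.card_eq_sum_card_fiberwise (fun j _ => hpA j)]
    simp
  · rw [← Finset.sum_fiberwise_of_maps_to (fun j _ => hpA j) (fun j => a (p j))]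
    refine Finset.sum_congr rfl fun x _ => ?_
    rw [Finset.sum_congr rfl (fun j hj => (Finset.mem_filter.mp hj).2), Finset.sum_const]

private lemma chain_lemma (A : Finset ℤ) (a : ℕ → ℤ) (ha : StrictMono a)
    (r h k : ℕ) (hr : 1 ≤ r) (haA : ∀ i, i < k → a i ∈ A) :
    ∀ (d : ℕ) (p p' : Fin h → ℕ), Monotone p → Monotone p' →
    (∀ j, p j ≤ p' j) → (∀ j, p' j < k) →
    (∀ q, (Finset.univ.filter fun j => p j = q).card ≤ r) →
    (∀ q, (Finset.univ.filter fun j => p' j = q).card ≤ r) →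
    (∑ j, (p' j - p j)) = d →
    ∃ T : Finset ℤ, (↑T : Set ℤ) ⊆ genSum r h A ∧ d + 1 ≤ T.card ∧
      ∀ x ∈ T, (∑ j, a (p j)) ≤ x ∧ x ≤ ∑ j, a (p' j) := by
  intro d
  induction d with
  | zero =>
    intro p p' hm hm' hle hk' hmu hmu' hsum
    have hpp : ∀ j, p j = p' j := by
      intro j
      have h0 : p' j - p j = 0 :=
        Finset.sum_eq_zero_iff.mp hsum j (Finset.mem_univ j)
      have := hle j; omega
    have hval : (∑ j, a (p j)) = ∑ j, a (p' j) :=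
      Finset.sum_congr rfl fun j _ => by rw [hpp j]
    refine ⟨{∑ j, a (p j)}, ?_, by simp, ?_⟩
    · intro x hx
      simp only [Finset.coe_singleton, Set.mem_singleton_iff] at hx
      subst hx
      exact config_mem A a ha.injective r h p
        (fun j => haA _ (lt_of_le_of_lt (hle j) (hk' j))) hmu
    · intro x hx
      simp only [Finset.mem_singleton] at hx
      subst hx
      exact ⟨le_refl _, le_of_eq hval⟩
  | succ d ih =>
    intro p p' hm hm' hle hk' hmu hmu' hsum
    classical
    -- find the least index where p < p'
    have hSne : (Finset.univ.filter fun j => p j < p' j).Nonempty := by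
      by_contra hc
      rw [Finset.not_nonempty_iff_eq_empty, Finset.filter_eq_empty_iff] at hc
      have : (∑ j, (p' j - p j)) = 0 := by
        apply Finset.sum_eq_zero
        intro j _
        have h1 := hc (Finset.mem_univ j)
        have h2 := hle j
        omega
      omega
    set j₀ := (Finset.univ.filter fun j => p j < p' j).min' hSne with hj₀def
    have hj₀mem := (Finset.univ.filter fun j => p j < p' j).min'_mem hSne
    have hj₀ : p j₀ < p' j₀ := (Finset.mem_filter.mp hj₀mem).2
    have hbelow : ∀ i, i < j₀ → p i = p' i := by
      intro i hi
      by_contra hne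
      have hilt : p i < p' i := lt_of_le_of_ne (hle i) hne
      have : j₀ ≤ i := Finset.min'_le _ _ (Finset.mem_filter.mpr ⟨Finset.mem_univ i, hilt⟩)
      exact absurd hi (not_lt.mpr this)
    set p'' := Function.update p' j₀ (p' j₀ - 1) with hp''def
    have hp''j₀ : p'' j₀ = p' j₀ - 1 := Function.update_self _ _ _
    have hp''ne : ∀ j, j ≠ j₀ → p'' j = p' j := fun j hj => Function.update_of_ne hj _ _
    have hm'' : Monotone p'' := by
      intro i j hij
      rcases eq_or_ne i j₀ with hi | hi <;> rcases eq_or_ne j j₀ with hj | hj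
      · subst hi; subst hj; exact le_refl _
      · subst hi
        rw [hp''j₀, hp''ne j hj]
        exact le_trans (Nat.sub_le _ _) (hm' hij)
      · subst hj
        have hij' : i < j₀ := lt_of_le_of_ne hij hi
        rw [hp''ne i hi, hp''j₀, ← hbelow i hij']
        have := hm (le_of_lt hij')
        omega
      · rw [hp''ne i hi, hp''ne j hj]; exact hm' hij
    have hle'' : ∀ j, p j ≤ p'' j := by
      intro j
      rcases eq_or_ne j j₀ with hj | hj
      · subst hj; rw [hp''j₀]; omega
      · rw [hp''ne j hj]; exact hle j
    have hk'' : ∀ j, p'' j < k := by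
      intro j
      rcases eq_or_ne j j₀ with hj | hj
      · subst hj; rw [hp''j₀]; exact lt_of_le_of_lt (Nat.sub_le _ _) (hk' _)
      · rw [hp''ne j hj]; exact hk' j
    have hmu'' : ∀ q, (Finset.univ.filter fun j => p'' j = q).card ≤ r := by
      intro q
      rcases eq_or_ne q (p' j₀ - 1) with hq | hq
      · subst hq
        rcases eq_or_ne (p j₀) (p' j₀ - 1) with hpq | hpq
        · -- fiber ⊆ fiber of p
          refine le_trans (Finset.card_le_card ?_) (hmu (p' j₀ - 1))
          intro j hj
          simp only [Finset.mem_filter, Finset.mem_univ, true_and] at hj ⊢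
          rcases eq_or_ne j j₀ with h1 | h1
          · subst h1; exact hpq
          · rw [hp''ne j h1] at hj
            rcases lt_or_ge j j₀ with h2 | h2
            · rw [← hbelow j h2] at hj; exact hj
            · exfalso
              have h3 : j₀ < j := lt_of_le_of_ne h2 (Ne.symm h1)
              have := hm' (le_of_lt h3)
              omega
        · refine le_trans (fiber_le_one p'' _ (j₀ : ℕ) ?_) hr
          intro j hj
          rcases eq_or_ne j j₀ with h1 | h1
          · rw [h1]
          · exfalso
            rw [hp''ne j h1] at hj
            rcases lt_or_ge j j₀ with h2 | h2
            · rw [← hbelow j h2] at hj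
              have := hm (le_of_lt h2)
              omega
            · have h3 : j₀ < j := lt_of_le_of_ne h2 (Ne.symm h1)
              have := hm' (le_of_lt h3)
              omega
      · refine le_trans (Finset.card_le_card ?_) (hmu' q)
        intro j hj
        simp only [Finset.mem_filter, Finset.mem_univ, true_and] at hj ⊢
        rcases eq_or_ne j j₀ with h1 | h1
        · exfalso; subst h1; rw [hp''j₀] at hj; exact hq hj.symm
        · rwa [hp''ne j h1] at hj
    have hsum'' : (∑ j, (p'' j - p j)) = d := by
      have e1 : (∑ j, (p'' j - p j)) + (p' j₀ - p j₀) = (∑ j, (p' j - p j)) + (p'' j₀ - p j₀) := by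
        rw [← Finset.sum_erase_add _ _ (Finset.mem_univ j₀),
            ← Finset.sum_erase_add _ (fun j => p' j - p j) (Finset.mem_univ j₀)]
        have : ∀ j ∈ Finset.univ.erase j₀, p'' j - p j = p' j - p j := by
          intro j hj
          rw [hp''ne j (Finset.mem_erase.mp hj).1]
        rw [Finset.sum_congr rfl this]
        ring
      rw [hsum, hp''j₀] at e1
      omega
    have hvlt : (∑ j, a (p'' j)) < ∑ j, a (p' j) := by
      rw [← Finset.sum_erase_add _ _ (Finset.mem_univ j₀),
          ← Finset.sum_erase_add _ (fun j => a (p' j)) (Finset.mem_univ j₀)]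
      have : ∀ j ∈ Finset.univ.erase j₀, a (p'' j) = a (p' j) := by
        intro j hj
        rw [hp''ne j (Finset.mem_erase.mp hj).1]
      rw [Finset.sum_congr rfl this]
      have : a (p'' j₀) < a (p' j₀) := by
        rw [hp''j₀]; exact ha (by omega)
      omega
    obtain ⟨T, hTsub, hTcard, hTbnd⟩ := ih p p'' hm hm'' hle'' hk'' hmu hmu'' hsum''
    refine ⟨insert (∑ j, a (p' j)) T, ?_, ?_, ?_⟩
    · intro x hx
      simp only [Finset.coe_insert, Set.mem_insert_iff] at hx
      rcases hx with hx | hx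
      · subst hx
        exact config_mem A a ha.injective r h p' (fun j => haA _ (hk' j)) hmu'
      · exact hTsub hx
    · have hnotmem : (∑ j, a (p' j)) ∉ T := by
        intro hc
        have := (hTbnd _ hc).2
        omega
      rw [Finset.card_insert_of_notMem hnotmem]
      omega
    · intro x hx
      rcases Finset.mem_insert.mp hx with hx | hx
      · subst hx
        constructor
        · exact Finset.sum_le_sum fun j _ => ha.monotone (hle j)
        · exact le_refl _
      · obtain ⟨h1, h2⟩ := hTbnd x hx
        exact ⟨h1, le_trans h2 (le_of_lt hvlt)⟩
private lemma sum_smallest_le (A : Finset ℤ) (a : ℕ → ℤ) (ha : StrictMono a) (k : ℕ)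
    (hsurj : ∀ y ∈ A, ∃ i, i < k ∧ a i = y) :
    ∀ (n : ℕ) (S : Finset ℤ), S ⊆ A → S.card = n →
      (∑ i ∈ Finset.range n, a i) ≤ ∑ x ∈ S, x := by
  intro n
  induction n with
  | zero => intro S _ hS; simp [Finset.card_eq_zero.mp hS]
  | succ n ih =>
    intro S hSA hScard
    have hSne : S.Nonempty := Finset.card_pos.mp (by omega)
    set x := S.max' hSne with hxdef
    have hxmem : x ∈ S := S.max'_mem hSne
    have hx : a n ≤ x := by
      by_contra hcon
      push_neg at hcon
      have hsub : S ⊆ (Finset.range n).image a := by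
        intro y hy
        obtain ⟨i, hik, rfl⟩ := hsurj y (hSA hy)
        apply Finset.mem_image_of_mem
        rw [Finset.mem_range, ← ha.lt_iff_lt]
        exact lt_of_le_of_lt (S.le_max' _ hy) hcon
      have h1 := Finset.card_le_card hsub
      have h2 := Finset.card_image_le (s := Finset.range n) (f := a)
      rw [Finset.card_range] at h2
      omega
    have hcarde : (S.erase x).card = n := by
      rw [Finset.card_erase_of_mem hxmem, hScard]
      omega
    have h1 := ih (S.erase x) (Finset.Subset.trans (Finset.erase_subset _ _) hSA) hcarde
    rw [Finset.sum_range_succ, ← Finset.sum_erase_add S _ hxmem]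
    exact add_le_add h1 hx

private lemma sum_le_largest (A : Finset ℤ) (a : ℕ → ℤ) (ha : StrictMono a) (k : ℕ)
    (hcard : A.card = k)
    (hsurj : ∀ y ∈ A, ∃ i, i < k ∧ a i = y) :
    ∀ (n : ℕ) (S : Finset ℤ), S ⊆ A → S.card = n →
      (∑ x ∈ S, x) ≤ ∑ i ∈ Finset.Ico (k - n) k, a i := by
  intro n
  induction n with
  | zero => intro S _ hS; simp [Finset.card_eq_zero.mp hS]
  | succ n ih =>
    intro S hSA hScard
    have hnk : n + 1 ≤ k := by
      rw [← hcard, ← hScard]; exact Finset.card_le_card hSA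
    have hSne : S.Nonempty := Finset.card_pos.mp (by omega)
    set x := S.min' hSne with hxdef
    have hxmem : x ∈ S := S.min'_mem hSne
    have hx : x ≤ a (k - (n + 1)) := by
      by_contra hcon
      push_neg at hcon
      have hsub : S ⊆ (Finset.Ico (k - n) k).image a := by
        intro y hy
        obtain ⟨i, hik, rfl⟩ := hsurj y (hSA hy)
        apply Finset.mem_image_of_mem
        rw [Finset.mem_Ico]
        have : a (k - (n + 1)) < a i := lt_of_lt_of_le hcon (S.min'_le _ hy)
        rw [ha.lt_iff_lt] at this
        omega
      have h1 := Finset.card_le_card hsub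
      have h2 := Finset.card_image_le (s := Finset.Ico (k - n) k) (f := a)
      rw [Nat.card_Ico] at h2
      omega
    have hcarde : (S.erase x).card = n := by
      rw [Finset.card_erase_of_mem hxmem, hScard]
      omega
    have h1 := ih (S.erase x) (Finset.Subset.trans (Finset.erase_subset _ _) hSA) hcarde
    have hkk : k - (n + 1) + 1 = k - n := by omega
    have hsplit : ∑ i ∈ Finset.Ico (k - (n + 1)) k, a i
        = a (k - (n + 1)) + ∑ i ∈ Finset.Ico (k - n) k, a i := by
      rw [Finset.sum_eq_sum_Ico_succ_bot (by omega : k - (n + 1) < k), hkk]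
    rw [hsplit, ← Finset.sum_erase_add S _ hxmem]
    rw [add_comm (a (k - (n+1)))]
    exact add_le_add h1 hx

private lemma genSum_one (A : Finset ℤ) (n : ℕ) (x : ℤ) (hx : x ∈ genSum 1 n A) :
    ∃ S : Finset ℤ, S ⊆ A ∧ S.card = n ∧ ∑ y ∈ S, y = x := by
  classical
  obtain ⟨c, hc1, _, hcs, hcv⟩ := hx
  refine ⟨A.filter fun t => c t ≠ 0, Finset.filter_subset _ _, ?_, ?_⟩
  · rw [Finset.card_filter, ← hcs]
    refine Finset.sum_congr rfl fun t _ => ?_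
    have := hc1 t
    split_ifs with hh <;> omega
  · rw [← hcv, Finset.sum_filter]
    refine Finset.sum_congr rfl fun t _ => ?_
    rcases Nat.le_one_iff_eq_zero_or_eq_one.mp (hc1 t) with hh | hh <;> simp [hh]

private lemma genSum_finite (A : Finset ℤ) (hA : A.Nonempty) (r h : ℕ) :
    (genSum r h A).Finite := by
  apply Set.Finite.subset (Set.finite_Icc ((h : ℤ) * A.min' hA) ((h : ℤ) * A.max' hA))
  rintro x ⟨c, _, _, hcs, hcv⟩
  simp only [Set.mem_Icc]
  constructor
  · rw [← hcv, ← hcs]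
    calc ((∑ t ∈ A, c t : ℕ) : ℤ) * A.min' hA = ∑ t ∈ A, (c t : ℤ) * A.min' hA := by
          push_cast; rw [Finset.sum_mul]
      _ ≤ ∑ t ∈ A, c t • t := Finset.sum_le_sum fun t ht => by
          rw [nsmul_eq_mul]
          exact mul_le_mul_of_nonneg_left (A.min'_le t ht) (by positivity)
  · rw [← hcv, ← hcs]
    calc (∑ t ∈ A, c t • t) ≤ ∑ t ∈ A, (c t : ℤ) * A.max' hA :=
          Finset.sum_le_sum fun t ht => by
            rw [nsmul_eq_mul]
            exact mul_le_mul_of_nonneg_left (A.le_max' t ht) (by positivity)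
      _ = ((∑ t ∈ A, c t : ℕ) : ℤ) * A.max' hA := by push_cast; rw [Finset.sum_mul]
theorem stmt15 (A : Finset ℤ) (k h m r ε : ℕ)
    (hA : A.Nonempty) (hk : A.card = k)
    (hh : h = m * r + ε) (hε1 : 1 ≤ ε) (hε2 : ε ≤ r - 1) (hmk : m + ε ≤ k) :
    ((genSum r h A \ (iterSum (r - 1) (genSum 1 m A) + genSum 1 (m + ε) A)).ncard : ℤ)
        ≥ (ε : ℤ) ^ 2 - ε ∧
    ((genSum r h A).ncard : ℤ) ≥
      (h : ℤ) * k - (m : ℤ) ^ 2 * r + 1 - 2 * m * ε - ε := by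
  classical
  have hr0 : 0 < r := by omega
  have hεr : ε < r := by omega
  have hr1 : 1 ≤ r := by omega
  have kpos : 1 ≤ k := by omega
  -- sorted enumeration of A, extended to all of ℕ
  set f := A.orderEmbOfFin hk with hfdef
  set aa : ℕ → ℤ := fun i => if hi : i < k then f ⟨i, hi⟩ else f ⟨k - 1, by omega⟩ + ((i : ℤ) - k + 1) with haadef
  have hmono : StrictMono aa := by
    intro i j hij
    simp only [haadef]
    by_cases hi : i < k <;> by_cases hj : j < k
    · rw [dif_pos hi, dif_pos hj]
      exact f.strictMono (by exact Fin.mk_lt_mk.mpr hij)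
    · rw [dif_pos hi, dif_neg hj]
      have h1 : f ⟨i, hi⟩ ≤ f ⟨k - 1, by omega⟩ := f.monotone (by
        apply Fin.mk_le_mk.mpr; omega)
      have h2 : (0 : ℤ) < (j : ℤ) - k + 1 := by omega
      linarith
    · omega
    · rw [dif_neg hi, dif_neg hj]
      have h2 : ((i : ℤ) - k + 1) < ((j : ℤ) - k + 1) := by
        have : (i : ℤ) < j := by exact_mod_cast hij
        omega
      linarith
  have haA : ∀ i, i < k → aa i ∈ A := by
    intro i hi
    simp only [haadef]
    rw [dif_pos hi]
    exact A.orderEmbOfFin_mem hk ⟨i, hi⟩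
  have hsurj : ∀ y ∈ A, ∃ i, i < k ∧ aa i = y := by
    intro y hy
    have hry : y ∈ Set.range f := by
      rw [hfdef, A.range_orderEmbOfFin hk]; exact hy
    obtain ⟨i, hi⟩ := hry
    refine ⟨(i : ℕ), i.isLt, ?_⟩
    simp only [haadef]
    rw [dif_pos i.isLt]
    rw [← hi]
  -- configurations
  set ps : ℕ → ℕ := fun j => j / r with hpsdef
  set pe : ℕ → ℕ := fun j => k - 1 - (h - 1 - j) / r with hpedef
  set pb : ℕ → ℕ := fun j => if j < m * r then j / r else j - m * r + m with hpbdef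
  set qb : ℕ → ℕ := fun j => if j < ε then k - m - ε + j else k - m + (j - ε) / r with hqbdef
  have hm1 : (h - 1) / r = m := by
    have e : h - 1 = m * r + (ε - 1) := by omega
    rw [e, mul_add_div' r m _ hr0 (by omega)]
  have hdivle : ∀ j, j < h → j / r ≤ m := by
    intro j hj
    have h1 : j / r ≤ (h - 1) / r := Nat.div_le_div_right (by omega)
    omega
  have hdivsum : ∀ j, j < h → j / r + (h - 1 - j) / r ≤ m := by
    intro j hj
    have h1 := div_add_div_le j (h - 1 - j) r hr0
    have h2 : j + (h - 1 - j) = h - 1 := by omega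
    rw [h2, hm1] at h1
    exact h1
  have hpelt : ∀ j : ℕ, pe j < k := by
    intro j
    simp only [hpedef]
    have z : 0 ≤ (h - 1 - j) / r := Nat.zero_le _
    omega
  have hdivlth : ∀ j, j < h → (h - 1 - j) / r ≤ m := by
    intro j hj
    have h1 := hdivsum j hj
    have z : 0 ≤ j / r := Nat.zero_le _
    omega
  -- multiplicity bounds
  have hmultps : ∀ q, (Finset.univ.filter fun j : Fin h => ps (j : ℕ) = q).card ≤ r := by
    intro q
    apply fiber_le_of_inj _ q (fun j => (j : ℕ) % r)
    · intro j _; exact Nat.mod_lt _ hr0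
    · intro j₁ j₂ e₁ e₂ em
      simp only [hpsdef] at e₁ e₂
      apply Fin.ext
      rw [← Nat.div_add_mod (j₁ : ℕ) r, ← Nat.div_add_mod (j₂ : ℕ) r, e₁, e₂, em]
  have hmultpe : ∀ q, (Finset.univ.filter fun j : Fin h => pe (j : ℕ) = q).card ≤ r := by
    intro q
    apply fiber_le_of_inj _ q (fun j => (h - 1 - (j : ℕ)) % r)
    · intro j _; exact Nat.mod_lt _ hr0
    · intro j₁ j₂ e₁ e₂ em
      simp only [hpedef] at e₁ e₂
      have b₁ := hdivlth (j₁ : ℕ) j₁.isLt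
      have b₂ := hdivlth (j₂ : ℕ) j₂.isLt
      have hdd : (h - 1 - (j₁ : ℕ)) / r = (h - 1 - (j₂ : ℕ)) / r := by
        have z₁ : 0 ≤ (h - 1 - (j₁ : ℕ)) / r := Nat.zero_le _
        have z₂ : 0 ≤ (h - 1 - (j₂ : ℕ)) / r := Nat.zero_le _
        omega
      have heq : h - 1 - (j₁ : ℕ) = h - 1 - (j₂ : ℕ) := by
        rw [← Nat.div_add_mod (h - 1 - (j₁ : ℕ)) r, ← Nat.div_add_mod (h - 1 - (j₂ : ℕ)) r,
          hdd, em]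
      have j₁lt := j₁.isLt
      have j₂lt := j₂.isLt
      apply Fin.ext
      omega
  have hmultpb : ∀ q, (Finset.univ.filter fun j : Fin h => pb (j : ℕ) = q).card ≤ r := by
    intro q
    rcases lt_or_ge q m with hq | hq
    · apply fiber_le_of_inj _ q (fun j => (j : ℕ) % r)
      · intro j _; exact Nat.mod_lt _ hr0
      · intro j₁ j₂ e₁ e₂ em
        simp only [hpbdef] at e₁ e₂
        split_ifs at e₁ e₂ with h₁ h₂ <;> try omega
        apply Fin.ext
        rw [← Nat.div_add_mod (j₁ : ℕ) r, ← Nat.div_add_mod (j₂ : ℕ) r, e₁, e₂, em]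
    · refine le_trans (fiber_le_one _ q (q + m * r - m) ?_) hr1
      intro j hj
      simp only [hpbdef] at hj
      split_ifs at hj with h₁
      · exfalso
        have hlt : (j : ℕ) / r < m := by
          rw [Nat.div_lt_iff_lt_mul hr0]; omega
        omega
      · omega
  have hmultqb : ∀ q, (Finset.univ.filter fun j : Fin h => qb (j : ℕ) = q).card ≤ r := by
    intro q
    rcases lt_or_ge q (k - m) with hq | hq
    · refine le_trans (fiber_le_one _ q (q - (k - m - ε)) ?_) hr1
      intro j hj
      simp only [hqbdef] at hj
      split_ifs at hj with h₁
      · omega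
      · exfalso
        have z : 0 ≤ ((j : ℕ) - ε) / r := Nat.zero_le _
        omega
    · apply fiber_le_of_inj _ q (fun j => ((j : ℕ) - ε) % r)
      · intro j _; exact Nat.mod_lt _ hr0
      · intro j₁ j₂ e₁ e₂ em
        simp only [hqbdef] at e₁ e₂
        have j₁lt := j₁.isLt
        have j₂lt := j₂.isLt
        split_ifs at e₁ e₂ with h₁ h₂ <;> try omega
        have hdd : ((j₁ : ℕ) - ε) / r = ((j₂ : ℕ) - ε) / r := by
          have z₁ : 0 ≤ ((j₁ : ℕ) - ε) / r := Nat.zero_le _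
          have z₂ : 0 ≤ ((j₂ : ℕ) - ε) / r := Nat.zero_le _
          omega
        have heq : (j₁ : ℕ) - ε = (j₂ : ℕ) - ε := by
          rw [← Nat.div_add_mod ((j₁ : ℕ) - ε) r, ← Nat.div_add_mod ((j₂ : ℕ) - ε) r, hdd, em]
        apply Fin.ext
        omega
  -- monotonicity and comparison facts
  have hmonops : Monotone (fun j : Fin h => ps (j : ℕ)) := by
    intro i j hij
    exact Nat.div_le_div_right (Fin.le_def.mp hij)
  have hmonope : Monotone (fun j : Fin h => pe (j : ℕ)) := by
    intro i j hij
    simp only [hpedef]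
    have h1 : (h - 1 - (j : ℕ)) / r ≤ (h - 1 - (i : ℕ)) / r :=
      Nat.div_le_div_right (by have := Fin.le_def.mp hij; omega)
    have z₁ : 0 ≤ (h - 1 - (i : ℕ)) / r := Nat.zero_le _
    omega
  have hmonopb : Monotone (fun j : Fin h => pb (j : ℕ)) := by
    intro i j hij
    have hij' := Fin.le_def.mp hij
    simp only [hpbdef]
    split_ifs with h₁ h₂ h₂
    · exact Nat.div_le_div_right hij'
    · have hlt : (i : ℕ) / r < m := by
        rw [Nat.div_lt_iff_lt_mul hr0]; omega
      omega
    · omega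
    · omega
  have hmonoqb : Monotone (fun j : Fin h => qb (j : ℕ)) := by
    intro i j hij
    have hij' := Fin.le_def.mp hij
    simp only [hqbdef]
    split_ifs with h₁ h₂ h₂
    · omega
    · have z : 0 ≤ ((j : ℕ) - ε) / r := Nat.zero_le _
      omega
    · omega
    · have h1 : ((i : ℕ) - ε) / r ≤ ((j : ℕ) - ε) / r :=
        Nat.div_le_div_right (by omega)
      have z : 0 ≤ ((i : ℕ) - ε) / r := Nat.zero_le _
      omega
  have hlespb : ∀ j : Fin h, ps (j : ℕ) ≤ pb (j : ℕ) := by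
    intro j
    simp only [hpsdef, hpbdef]
    split_ifs with h₁
    · exact le_refl _
    · have := hdivle (j : ℕ) j.isLt
      omega
  have hpblt : ∀ j : Fin h, pb (j : ℕ) < k := by
    intro j
    have hjlt := j.isLt
    simp only [hpbdef]
    split_ifs with h₁
    · have hlt : (j : ℕ) / r < m := by
        rw [Nat.div_lt_iff_lt_mul hr0]; omega
      omega
    · omega
  have hlespe : ∀ j : Fin h, ps (j : ℕ) ≤ pe (j : ℕ) := by
    intro j
    have h1 := hdivsum (j : ℕ) j.isLt
    simp only [hpsdef, hpedef]
    have z₁ : 0 ≤ (j : ℕ) / r := Nat.zero_le _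
    have z₂ : 0 ≤ (h - 1 - (j : ℕ)) / r := Nat.zero_le _
    omega
  have heqqbpe : ∀ j : ℕ, ε ≤ j → j < h → qb j = pe j := by
    intro j hεj hjh
    simp only [hqbdef, hpedef]
    rw [if_neg (by omega)]
    have hmr1 : 1 ≤ m * r := by omega
    have ht : j - ε < m * r := by omega
    have h1 : (m * r - 1 - (j - ε)) / r = m - 1 - (j - ε) / r := div_reflect r m _ hr0 ht
    have h2 : h - 1 - j = m * r - 1 - (j - ε) := by omega
    have h3 : (j - ε) / r < m := by
      rw [Nat.div_lt_iff_lt_mul hr0]; omega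
    have hm1' : 1 ≤ m := by
      rcases Nat.eq_zero_or_pos m with hm | hm
      · have hz : m * r = 0 := by rw [hm, zero_mul]
        omega
      · exact hm
    rw [h2, h1]
    have z : 0 ≤ (j - ε) / r := Nat.zero_le _
    omega
  have hleqbpe : ∀ j : Fin h, qb (j : ℕ) ≤ pe (j : ℕ) := by
    intro j
    rcases lt_or_ge (j : ℕ) ε with hj | hj
    · have h1 : (h - 1 - (j : ℕ)) / r = m := by
        have e : h - 1 - (j : ℕ) = m * r + (ε - 1 - (j : ℕ)) := by omega
        rw [e, mul_add_div' r m _ hr0 (by omega)]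
      simp only [hqbdef, hpedef]
      rw [if_pos hj, h1]
      omega
    · rw [heqqbpe _ hj j.isLt]
  -- the three chains
  obtain ⟨T3, hT3sub, hT3card, hT3bnd⟩ :=
    chain_lemma A aa hmono r h k hr1 haA (∑ j : Fin h, (pe (j : ℕ) - ps (j : ℕ)))
      (fun j => ps (j : ℕ)) (fun j => pe (j : ℕ)) hmonops hmonope hlespe
      (fun j => hpelt _) hmultps hmultpe rfl
  obtain ⟨T1, hT1sub, hT1card, hT1bnd⟩ :=
    chain_lemma A aa hmono r h k hr1 haA (∑ j : Fin h, (pb (j : ℕ) - ps (j : ℕ)))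
      (fun j => ps (j : ℕ)) (fun j => pb (j : ℕ)) hmonops hmonopb hlespb
      hpblt hmultps hmultpb rfl
  obtain ⟨T2, hT2sub, hT2card, hT2bnd⟩ :=
    chain_lemma A aa hmono r h k hr1 haA (∑ j : Fin h, (pe (j : ℕ) - qb (j : ℕ)))
      (fun j => qb (j : ℕ)) (fun j => pe (j : ℕ)) hmonoqb hmonope hleqbpe
      (fun j => hpelt _) hmultqb hmultpe rfl
  set d3 := ∑ j : Fin h, (pe (j : ℕ) - ps (j : ℕ)) with hd3def
  set d1 := ∑ j : Fin h, (pb (j : ℕ) - ps (j : ℕ)) with hd1def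
  set d2 := ∑ j : Fin h, (pe (j : ℕ) - qb (j : ℕ)) with hd2def
  -- generic splitting of range h at a point
  have hsplitgen : ∀ (g : ℕ → ℕ) (c : ℕ), c ≤ h → ∑ j ∈ Finset.range h, g j
      = ∑ j ∈ Finset.range c, g j + ∑ i ∈ Finset.range (h - c), g (c + i) := by
    intro g c hc
    rw [Finset.range_eq_Ico, ← Finset.sum_Ico_consecutive _ (Nat.zero_le c) hc,
      ← Finset.range_eq_Ico, Finset.sum_Ico_eq_sum_range]
  -- size of d1
  have hd1val : 2 * d1 + ε = ε * ε := by
    have h1 : d1 = ∑ j ∈ Finset.range h, (pb j - ps j) := by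
      rw [hd1def]; exact Fin.sum_univ_eq_sum_range (fun j => pb j - ps j) h
    rw [hsplitgen (fun j => pb j - ps j) (m * r) (by omega)] at h1
    have hz : ∑ j ∈ Finset.range (m * r), (pb j - ps j) = 0 := by
      apply Finset.sum_eq_zero
      intro j hj
      simp only [hpbdef, hpsdef]
      rw [if_pos (Finset.mem_range.mp hj)]
      omega
    have hsec : ∀ i ∈ Finset.range (h - m * r), pb (m * r + i) - ps (m * r + i) = i := by
      intro i hi
      have hi' : i < ε := by have := Finset.mem_range.mp hi; omega
      simp only [hpbdef, hpsdef]
      rw [if_neg (by omega), mul_add_div' r m i hr0 (by omega)]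
      omega
    rw [hz, Finset.sum_congr rfl hsec, zero_add] at h1
    have hhe : h - m * r = ε := by omega
    rw [hhe] at h1
    have hg := Finset.sum_range_id_mul_two ε
    have hee : ε * (ε - 1) + ε = ε * ε := by
      cases ε with
      | zero => simp
      | succ n => simp [Nat.succ_sub_one]; ring
    omega
  -- size of d2
  have hd2val : 2 * d2 + ε = ε * ε := by
    have h1 : d2 = ∑ j ∈ Finset.range h, (pe j - qb j) := by
      rw [hd2def]; exact Fin.sum_univ_eq_sum_range (fun j => pe j - qb j) h
    rw [hsplitgen (fun j => pe j - qb j) ε (by omega)] at h1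
    have hz : ∑ i ∈ Finset.range (h - ε), (pe (ε + i) - qb (ε + i)) = 0 := by
      apply Finset.sum_eq_zero
      intro i hi
      rw [heqqbpe (ε + i) (by omega) (by have := Finset.mem_range.mp hi; omega)]
      omega
    have hsec : ∀ j ∈ Finset.range ε, pe j - qb j = ε - 1 - j := by
      intro j hj
      have hj' := Finset.mem_range.mp hj
      have hdm : (h - 1 - j) / r = m := by
        have e : h - 1 - j = m * r + (ε - 1 - j) := by omega
        rw [e, mul_add_div' r m _ hr0 (by omega)]
      simp only [hpedef, hqbdef]
      rw [hdm, if_pos hj']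
      omega
    rw [hz, Finset.sum_congr rfl hsec, add_zero] at h1
    have hrefl : ∑ j ∈ Finset.range ε, (ε - 1 - j) = ∑ j ∈ Finset.range ε, j := by
      simpa using Finset.sum_range_reflect (fun t => t) ε
    rw [hrefl] at h1
    have hg := Finset.sum_range_id_mul_two ε
    have hee : ε * (ε - 1) + ε = ε * ε := by
      cases ε with
      | zero => simp
      | succ n => simp [Nat.succ_sub_one]; ring
    omega
  -- size of d3
  have hd3k : 2 * d3 + 2 * (r * m * m) + 4 * (m * ε) + 2 * h = 2 * (h * k) + 2 * (r * m) := by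
    have h1 : d3 = ∑ j ∈ Finset.range h, (pe j - ps j) := by
      rw [hd3def]; exact Fin.sum_univ_eq_sum_range (fun j => pe j - ps j) h
    have hterm : ∀ j ∈ Finset.range h, (pe j - ps j) + ((h - 1 - j) / r + j / r) = k - 1 := by
      intro j hj
      have hj' := Finset.mem_range.mp hj
      have hs := hdivsum j hj'
      simp only [hpedef, hpsdef]
      have z₁ : 0 ≤ j / r := Nat.zero_le _
      have z₂ : 0 ≤ (h - 1 - j) / r := Nat.zero_le _
      omega
    have hX : ∑ j ∈ Finset.range h, (pe j - ps j)
        + ∑ j ∈ Finset.range h, ((h - 1 - j) / r + j / r) + h = h * k := by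
      rw [← Finset.sum_add_distrib, Finset.sum_congr rfl hterm, Finset.sum_const,
        Finset.card_range, smul_eq_mul]
      have hk1 : h * (k - 1) + h = h * k := by
        have e : k - 1 + 1 = k := by omega
        calc h * (k - 1) + h = h * (k - 1 + 1) := by ring
          _ = h * k := by rw [e]
      omega
    have er : ∑ j ∈ Finset.range h, (h - 1 - j) / r = ∑ j ∈ Finset.range h, j / r := by
      simpa using Finset.sum_range_reflect (fun t => t / r) h
    have hY : ∑ j ∈ Finset.range h, ((h - 1 - j) / r + j / r)
        = 2 * ∑ j ∈ Finset.range h, j / r := by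
      rw [Finset.sum_add_distrib, er]
      omega
    have ediv : ∑ j ∈ Finset.range h, j / r = ∑ j ∈ Finset.range (m * r), j / r + m * ε := by
      rw [hsplitgen (fun j => j / r) (m * r) (by omega)]
      congr 1
      have hhe : h - m * r = ε := by omega
      rw [hhe,
        Finset.sum_congr rfl (fun i hi => mul_add_div' r m i hr0
          (by have := Finset.mem_range.mp hi; omega)),
        Finset.sum_const, Finset.card_range, smul_eq_mul, mul_comm]
    have eblock : ∑ j ∈ Finset.range (m * r), j / r = ∑ i ∈ Finset.range m, r * i := by
      have := sum_div_block (fun t => t) r hr0 m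
      simpa [smul_eq_mul] using this
    have egauss : 2 * (∑ i ∈ Finset.range m, r * i) + r * m = r * m * m := by
      rw [← Finset.mul_sum]
      have hg := Finset.sum_range_id_mul_two m
      have hkey : r * (m * (m - 1)) + r * m = r * m * m := by
        cases m with
        | zero => simp
        | succ n => simp [Nat.succ_sub_one]; ring
      have h2 : 2 * (r * (∑ i ∈ Finset.range m, i)) = r * (m * (m - 1)) := by
        rw [← hg]; ring
      omega
    omega
  -- extremal sums
  set Slow : ℕ → ℤ := fun n => ∑ i ∈ Finset.range n, aa i with hSlowdef
  set Shigh : ℕ → ℤ := fun n => ∑ i ∈ Finset.Ico (k - n) k, aa i with hShighdef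
  set minB : ℤ := ((r : ℤ) - 1) * Slow m + Slow (m + ε) with hminBdef
  set maxB : ℤ := ((r : ℤ) - 1) * Shigh m + Shigh (m + ε) with hmaxBdef
  have hsplitgenZ : ∀ (g : ℕ → ℤ) (c : ℕ), c ≤ h → ∑ j ∈ Finset.range h, g j
      = ∑ j ∈ Finset.range c, g j + ∑ i ∈ Finset.range (h - c), g (c + i) := by
    intro g c hc
    rw [Finset.range_eq_Ico, ← Finset.sum_Ico_consecutive _ (Nat.zero_le c) hc,
      ← Finset.range_eq_Ico, Finset.sum_Ico_eq_sum_range]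
  have hvpb : (∑ j : Fin h, aa (pb (j : ℕ))) = minB := by
    rw [Fin.sum_univ_eq_sum_range (fun j => aa (pb j)) h,
      hsplitgenZ (fun j => aa (pb j)) (m * r) (by omega)]
    have h1 : ∑ j ∈ Finset.range (m * r), aa (pb j) = ∑ i ∈ Finset.range m, (r • aa i) := by
      rw [Finset.sum_congr rfl (fun j hj => by
        simp only [hpbdef]
        rw [if_pos (Finset.mem_range.mp hj)])]
      exact sum_div_block aa r hr0 m
    have h2 : ∑ i ∈ Finset.range (h - m * r), aa (pb (m * r + i))
        = ∑ i ∈ Finset.range ε, aa (m + i) := by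
      have hhe : h - m * r = ε := by omega
      rw [hhe]
      refine Finset.sum_congr rfl fun i hi => ?_
      have hi' := Finset.mem_range.mp hi
      congr 1
      simp only [hpbdef]
      rw [if_neg (by omega)]
      omega
    have h3 : ∑ i ∈ Finset.Ico m (m + ε), aa i = ∑ i ∈ Finset.range ε, aa (m + i) := by
      rw [Finset.sum_Ico_eq_sum_range]
      have e : m + ε - m = ε := by omega
      rw [e]
    have h4 : Slow (m + ε) = Slow m + ∑ i ∈ Finset.Ico m (m + ε), aa i := by
      simp only [hSlowdef]
      rw [Finset.range_eq_Ico,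
        ← Finset.sum_Ico_consecutive aa (Nat.zero_le m) (Nat.le_add_right m ε),
        ← Finset.range_eq_Ico]
    have h5 : ∑ i ∈ Finset.range m, (r • aa i) = (r : ℤ) * Slow m := by
      rw [← Finset.smul_sum]
      simp only [hSlowdef]
      rw [nsmul_eq_mul]
    rw [h1, h2, ← h3, h5, hminBdef, h4]
    ring
  have hvqb : (∑ j : Fin h, aa (qb (j : ℕ))) = maxB := by
    rw [Fin.sum_univ_eq_sum_range (fun j => aa (qb j)) h,
      hsplitgenZ (fun j => aa (qb j)) ε (by omega)]
    have h1 : ∑ j ∈ Finset.range ε, aa (qb j) = ∑ i ∈ Finset.Ico (k - m - ε) (k - m), aa i := by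
      rw [Finset.sum_Ico_eq_sum_range]
      have e : k - m - (k - m - ε) = ε := by omega
      rw [e]
      refine Finset.sum_congr rfl fun j hj => ?_
      congr 1
      simp only [hqbdef]
      rw [if_pos (Finset.mem_range.mp hj)]
    have h2 : ∑ i ∈ Finset.range (h - ε), aa (qb (ε + i))
        = ∑ i ∈ Finset.range m, (r • aa (k - m + i)) := by
      have hhe : h - ε = m * r := by omega
      rw [hhe]
      rw [Finset.sum_congr rfl (fun t ht =>
        show aa (qb (ε + t)) = aa (k - m + t / r) by
          simp only [hqbdef]
          rw [if_neg (by omega), show ε + t - ε = t from by omega])]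
      exact sum_div_block (fun i => aa (k - m + i)) r hr0 m
    have h3 : Shigh m = ∑ i ∈ Finset.range m, aa (k - m + i) := by
      simp only [hShighdef]
      rw [Finset.sum_Ico_eq_sum_range]
      have e : k - (k - m) = m := by omega
      rw [e]
    have h4 : Shigh (m + ε) = ∑ i ∈ Finset.Ico (k - m - ε) (k - m), aa i + Shigh m := by
      simp only [hShighdef]
      have e : k - (m + ε) = k - m - ε := by omega
      rw [e, ← Finset.sum_Ico_consecutive aa (show k - m - ε ≤ k - m by omega)
        (show k - m ≤ k by omega)]
    have h5 : ∑ i ∈ Finset.range m, (r • aa (k - m + i))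
        = (r : ℤ) * ∑ i ∈ Finset.range m, aa (k - m + i) := by
      rw [← Finset.smul_sum, nsmul_eq_mul]
    rw [h1, h2, h5, ← h3, hmaxBdef, h4]
    ring
  -- bounds for elements of B
  have hsubB : ∀ (n : ℕ) (y : ℤ), y ∈ genSum 1 n A → Slow n ≤ y ∧ y ≤ Shigh n := by
    intro n y hy
    obtain ⟨S, hSA, hSc, hSs⟩ := genSum_one A n y hy
    constructor
    · rw [← hSs]
      exact sum_smallest_le A aa hmono k hsurj n S hSA hSc
    · rw [← hSs]
      exact sum_le_largest A aa hmono k hk hsurj n S hSA hSc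
  have hrcast : ((r - 1 : ℕ) : ℤ) = (r : ℤ) - 1 := by
    push_cast [Nat.cast_sub hr1]
    ring
  have hBbound : ∀ x ∈ (iterSum (r - 1) (genSum 1 m A) + genSum 1 (m + ε) A : Set ℤ),
      minB ≤ x ∧ x ≤ maxB := by
    intro x hx
    rw [Set.mem_add] at hx
    obtain ⟨u, hu, v, hv, rfl⟩ := hx
    obtain ⟨g, hg, rfl⟩ := hu
    have hu1 : ((r : ℤ) - 1) * Slow m ≤ ∑ i, g i := by
      calc ((r : ℤ) - 1) * Slow m = ∑ _i : Fin (r - 1), Slow m := by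
            rw [Finset.sum_const, Finset.card_univ, Fintype.card_fin, nsmul_eq_mul, hrcast]
        _ ≤ ∑ i, g i := Finset.sum_le_sum fun i _ => (hsubB m (g i) (hg i)).1
    have hu2 : (∑ i, g i) ≤ ((r : ℤ) - 1) * Shigh m := by
      calc (∑ i, g i) ≤ ∑ _i : Fin (r - 1), Shigh m :=
            Finset.sum_le_sum fun i _ => (hsubB m (g i) (hg i)).2
        _ = ((r : ℤ) - 1) * Shigh m := by
            rw [Finset.sum_const, Finset.card_univ, Fintype.card_fin, nsmul_eq_mul, hrcast]
    obtain ⟨hv1, hv2⟩ := hsubB (m + ε) v hv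
    exact ⟨add_le_add hu1 hv1, add_le_add hu2 hv2⟩
  -- minB ≤ maxB
  have hSlowhigh : ∀ n, n ≤ k → Slow n ≤ Shigh n := by
    intro n hn
    set S := (Finset.Ico (k - n) k).image aa with hSdef
    have hSA : S ⊆ A := by
      intro y hy
      obtain ⟨i, hi, rfl⟩ := Finset.mem_image.mp hy
      exact haA i (Finset.mem_Ico.mp hi).2
    have hcard : S.card = n := by
      rw [hSdef, Finset.card_image_of_injective _ hmono.injective, Nat.card_Ico]
      omega
    have hsum : ∑ y ∈ S, y = Shigh n := by
      rw [hSdef, Finset.sum_image (fun i _ j _ hij => hmono.injective hij)]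
    calc Slow n ≤ ∑ y ∈ S, y := sum_smallest_le A aa hmono k hsurj n S hSA hcard
      _ = Shigh n := hsum
  have hminmax : minB ≤ maxB := by
    have h1 := hSlowhigh m (by omega)
    have h2 := hSlowhigh (m + ε) (by omega)
    have hr' : (0 : ℤ) ≤ (r : ℤ) - 1 := by
      have : (1 : ℤ) ≤ (r : ℤ) := by exact_mod_cast hr1
      omega
    rw [hminBdef, hmaxBdef]
    exact add_le_add (mul_le_mul_of_nonneg_left h1 hr') h2
  -- the two separated families
  set T1' := T1.filter (fun x => x < minB) with hT1'def
  set T2' := T2.filter (fun x => maxB < x) with hT2'def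
  have hT1'card : d1 ≤ T1'.card := by
    have hsub : T1 ⊆ insert minB T1' := by
      intro x hx
      have hb : x ≤ minB := le_trans (hT1bnd x hx).2 (le_of_eq hvpb)
      rcases lt_or_eq_of_le hb with hlt | heq
      · exact Finset.mem_insert_of_mem (Finset.mem_filter.mpr ⟨hx, hlt⟩)
      · rw [heq]; exact Finset.mem_insert_self _ _
    have h1 := Finset.card_le_card hsub
    have h2 := Finset.card_insert_le minB T1'
    omega
  have hT2'card : d2 ≤ T2'.card := by
    have hsub : T2 ⊆ insert maxB T2' := by
      intro x hx
      have hb : maxB ≤ x := le_trans (le_of_eq hvqb.symm) (hT2bnd x hx).1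
      rcases lt_or_eq_of_le hb with hlt | heq
      · exact Finset.mem_insert_of_mem (Finset.mem_filter.mpr ⟨hx, hlt⟩)
      · rw [← heq]; exact Finset.mem_insert_self _ _
    have h1 := Finset.card_le_card hsub
    have h2 := Finset.card_insert_le maxB T2'
    omega
  have hdisj : Disjoint T1' T2' := by
    rw [Finset.disjoint_left]
    intro x hx1 hx2
    have h1 := (Finset.mem_filter.mp hx1).2
    have h2 := (Finset.mem_filter.mp hx2).2
    linarith
  have hUsub : ↑(T1' ∪ T2') ⊆ genSum r h A \ (iterSum (r - 1) (genSum 1 m A) + genSum 1 (m + ε) A) := by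
    intro x hx
    simp only [Finset.coe_union, Set.mem_union, Finset.mem_coe] at hx
    constructor
    · rcases hx with hx | hx
      · exact hT1sub (Finset.mem_coe.mpr (Finset.filter_subset _ _ hx))
      · exact hT2sub (Finset.mem_coe.mpr (Finset.filter_subset _ _ hx))
    · intro hxB
      obtain ⟨hb1, hb2⟩ := hBbound x hxB
      rcases hx with hx | hx
      · have := (Finset.mem_filter.mp hx).2; linarith
      · have := (Finset.mem_filter.mp hx).2; linarith
  have hfin : (genSum r h A \ (iterSum (r - 1) (genSum 1 m A) + genSum 1 (m + ε) A)).Finite :=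
    (genSum_finite A hA r h).diff
  have hnc1 : d1 + d2 ≤ (genSum r h A \ (iterSum (r - 1) (genSum 1 m A) + genSum 1 (m + ε) A)).ncard := by
    calc d1 + d2 ≤ T1'.card + T2'.card := by omega
      _ = (T1' ∪ T2').card := (Finset.card_union_of_disjoint hdisj).symm
      _ = (↑(T1' ∪ T2') : Set ℤ).ncard := (Set.ncard_coe_finset _).symm
      _ ≤ _ := Set.ncard_le_ncard hUsub hfin
  have hnc2 : d3 + 1 ≤ (genSum r h A).ncard := by
    calc d3 + 1 ≤ T3.card := hT3card
      _ = (↑T3 : Set ℤ).ncard := (Set.ncard_coe_finset T3).symm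
      _ ≤ (genSum r h A).ncard := Set.ncard_le_ncard hT3sub (genSum_finite A hA r h)
  constructor
  · have h1 : (d1 : ℤ) + d2 ≤
        ((genSum r h A \ (iterSum (r - 1) (genSum 1 m A) + genSum 1 (m + ε) A)).ncard : ℤ) := by
      exact_mod_cast hnc1
    have h2 : 2 * (d1 : ℤ) + ε = ε * ε := by exact_mod_cast hd1val
    have h3 : 2 * (d2 : ℤ) + ε = ε * ε := by exact_mod_cast hd2val
    rw [ge_iff_le, pow_two]
    linarith
  · have h1 : (d3 : ℤ) + 1 ≤ ((genSum r h A).ncard : ℤ) := by exact_mod_cast hnc2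
    have h2 : 2 * (d3 : ℤ) + 2 * ((r : ℤ) * m * m) + 4 * ((m : ℤ) * ε) + 2 * h
        = 2 * ((h : ℤ) * k) + 2 * ((r : ℤ) * m) := by exact_mod_cast hd3k
    have h4 : (h : ℤ) = (m : ℤ) * r + ε := by exact_mod_cast hh
    rw [ge_iff_le, pow_two]
    linarith
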